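/- arXiv:1110.5594 — 2 statements merged into one kernel-verified Lean document; each statement's English description precedes it below -/
import Mathlib

section
/- There is a positive constant c, depending only on n and β > 0, such that for every R > 0 and every z_0 = (x_0, y_0) in the closed upper half-plane, the volume of the Koch ball B_R(z_0) with respect to the measure y^β dx dy satisfies c^{-1} R^n (R + sqrt(y_0))^{n+2β} ≤ |B_R(z_0)|_β ≤ c R^n (R + sqrt(y_0))^{n+2β}, where n = 2. -/
open MeasureTheory

noncomputable def enorm2 (z w : ℝ × ℝ) : ℝ :=
  Real.sqrt ((z.1 - w.1)^2 + (z.2 - w.2)^2)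

/-- The Koch metric on the closed upper half-plane. -/
noncomputable def kochDist (z w : ℝ × ℝ) : ℝ :=
  enorm2 z w / Real.sqrt (z.2 + w.2 + enorm2 z w)

/-- The Koch ball relative to the open upper half-plane `H = ℝ × (0,∞)`. -/
def kochBall (R : ℝ) (z₀ : ℝ × ℝ) : Set (ℝ × ℝ) :=
  {z | 0 < z.2 ∧ kochDist z z₀ < R}

lemma kochBall_measurableSet (R : ℝ) (z₀ : ℝ × ℝ) : MeasurableSet (kochBall R z₀) := by
  have h1 : Continuous fun z : ℝ × ℝ => enorm2 z z₀ := by unfold enorm2; fun_prop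
  have h2 : Measurable fun z : ℝ × ℝ => kochDist z z₀ := by
    unfold kochDist
    exact h1.measurable.div
      ((by fun_prop :
        Continuous fun z : ℝ × ℝ => Real.sqrt (z.2 + z₀.2 + enorm2 z z₀)).measurable)
  exact (measurableSet_lt measurable_const measurable_snd).inter
    (measurableSet_lt h2 measurable_const)

lemma enorm2_nonneg (z w : ℝ × ℝ) : 0 ≤ enorm2 z w := Real.sqrt_nonneg _

lemma enorm2_sq (z w : ℝ × ℝ) : enorm2 z w ^ 2 = (z.1 - w.1)^2 + (z.2 - w.2)^2 :=
  Real.sq_sqrt (by positivity)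

lemma abs_snd_le_enorm2 (z w : ℝ × ℝ) : |z.2 - w.2| ≤ enorm2 z w := by
  rw [← Real.sqrt_sq_eq_abs]
  exact Real.sqrt_le_sqrt (by nlinarith [sq_nonneg (z.1 - w.1)])

lemma abs_fst_le_enorm2 (z w : ℝ × ℝ) : |z.1 - w.1| ≤ enorm2 z w := by
  rw [← Real.sqrt_sq_eq_abs]
  exact Real.sqrt_le_sqrt (by nlinarith [sq_nonneg (z.2 - w.2)])

set_option maxHeartbeats 1000000 in
/-- Volume of Koch balls with respect to the measure `y^β dx dy` (with `n = 2`):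
there is `c > 0`, depending only on `β`, with
`c⁻¹ R² (R + √y₀)^{2+2β} ≤ |B_R(z₀)|_β ≤ c R² (R + √y₀)^{2+2β}`. -/
theorem kochBall_volume_estimate (β : ℝ) (hβ : 0 < β) :
    ∃ c > 0, ∀ R > 0, ∀ z₀ : ℝ × ℝ, 0 ≤ z₀.2 →
      c⁻¹ * R ^ 2 * (R + Real.sqrt z₀.2) ^ ((2:ℝ) + 2 * β) ≤
          (∫ z in kochBall R z₀, z.2 ^ β) ∧
      (∫ z in kochBall R z₀, z.2 ^ β) ≤
          c * R ^ 2 * (R + Real.sqrt z₀.2) ^ ((2:ℝ) + 2 * β) := by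
  refine ⟨64 * 32 ^ β, by positivity, ?_⟩
  intro R hR z₀ hy₀
  set u : ℝ := Real.sqrt z₀.2 with hu
  have hu0 : 0 ≤ u := Real.sqrt_nonneg _
  have huy : u ^ 2 = z₀.2 := Real.sq_sqrt hy₀
  set s : ℝ := R + u with hs_def
  have hs : 0 < s := by positivity
  set h : ℝ := R * s / 8 with hh_def
  have hh : 0 < h := by positivity
  set ρ : ℝ := 2 * R * s with hρ_def
  have hρ : 0 < ρ := by positivity
  set Q : Set (ℝ × ℝ) :=
    Set.Ioo (z₀.1 - h) (z₀.1 + h) ×ˢ Set.Ioo (z₀.2 + h/2) (z₀.2 + h) with hQ_def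
  set T : Set (ℝ × ℝ) :=
    Set.Ioo (z₀.1 - ρ) (z₀.1 + ρ) ×ˢ Set.Ioo (z₀.2 - ρ) (z₀.2 + ρ) with hT_def
  -- Q is contained in the Koch ball
  have hQsub : Q ⊆ kochBall R z₀ := by
    rintro z ⟨hz1, hz2⟩
    simp only [Set.mem_Ioo] at hz1 hz2
    have hz2pos : 0 < z.2 := by linarith [hz2.1]
    refine ⟨hz2pos, ?_⟩
    set r : ℝ := enorm2 z z₀ with hr_def
    have hr0 : 0 ≤ r := enorm2_nonneg _ _
    have hrsq : r ^ 2 = (z.1 - z₀.1)^2 + (z.2 - z₀.2)^2 := enorm2_sq _ _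
    have hrlt : r ^ 2 < 2 * h ^ 2 := by
      have h1 : (z.1 - z₀.1)^2 < h^2 := by nlinarith [hz1.1, hz1.2]
      have h2 : (z.2 - z₀.2)^2 < h^2 := by nlinarith [hz2.1, hz2.2]
      nlinarith
    have hD : 0 < z.2 + z₀.2 + r := by linarith [hr0]
    have hkey : r ^ 2 < R ^ 2 * (z.2 + z₀.2 + r) := by
      have h2h : 2 * h ^ 2 ≤ R ^ 2 * (z₀.2 + h / 2) := by
        have hs2 : s ^ 2 ≤ 2 * R ^ 2 + 2 * z₀.2 := by
          rw [hs_def, ← huy]; nlinarith [sq_nonneg (R - u)]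
        have f1 : R ^ 2 * s ^ 2 ≤ R ^ 2 * (2 * R ^ 2 + 2 * z₀.2) :=
          mul_le_mul_of_nonneg_left hs2 (sq_nonneg R)
        have f2 : R ^ 2 * R ^ 2 ≤ R ^ 2 * (R * s) := by
          have hRs : R * R ≤ R * s := mul_le_mul_of_nonneg_left (by rw [hs_def]; linarith) hR.le
          calc R ^ 2 * R ^ 2 = R ^ 2 * (R * R) := by ring
            _ ≤ R ^ 2 * (R * s) := mul_le_mul_of_nonneg_left hRs (sq_nonneg R)
        have f3 : 0 ≤ R ^ 2 * z₀.2 := mul_nonneg (sq_nonneg R) hy₀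
        have hexp : h ^ 2 = R ^ 2 * s ^ 2 / 64 := by rw [hh_def]; ring
        have hexp2 : h / 2 = R * s / 16 := by rw [hh_def]; ring
        rw [hexp, hexp2]
        nlinarith [f1, f2, f3]
      have hstep : z₀.2 + h / 2 ≤ z.2 + z₀.2 + r := by linarith [hz2.1, hr0]
      have := mul_le_mul_of_nonneg_left hstep (sq_nonneg R)
      linarith
    show enorm2 z z₀ / Real.sqrt (z.2 + z₀.2 + enorm2 z z₀) < R
    rw [div_lt_iff₀ (Real.sqrt_pos.mpr hD)]
    have hsq : (R * Real.sqrt (z.2 + z₀.2 + r)) ^ 2 = R ^ 2 * (z.2 + z₀.2 + r) := by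
      rw [mul_pow, Real.sq_sqrt hD.le]
    have := hkey.trans_eq hsq.symm
    exact lt_of_pow_lt_pow_left₀ 2 (by positivity) this
  -- the Koch ball is contained in T
  have hTsub : kochBall R z₀ ⊆ T := by
    rintro z ⟨hz0, hzd⟩
    set r : ℝ := enorm2 z z₀ with hr_def
    have hr0 : 0 ≤ r := enorm2_nonneg _ _
    have hD : 0 < z.2 + z₀.2 + r := by linarith [hr0, hz0]
    have hlt : r < R * Real.sqrt (z.2 + z₀.2 + r) := by
      have := (div_lt_iff₀ (Real.sqrt_pos.mpr hD)).mp hzd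
      linarith
    have hsq : r ^ 2 < R ^ 2 * (z.2 + z₀.2 + r) := by
      have h1 : r ^ 2 < (R * Real.sqrt (z.2 + z₀.2 + r)) ^ 2 := by
        have hb : 0 < R * Real.sqrt (z.2 + z₀.2 + r) := by positivity
        exact pow_lt_pow_left₀ hlt hr0 (by norm_num)
      rwa [mul_pow, Real.sq_sqrt hD.le] at h1
    have habs2 : |z.2 - z₀.2| ≤ r := abs_snd_le_enorm2 _ _
    have habs1 : |z.1 - z₀.1| ≤ r := abs_fst_le_enorm2 _ _
    have hz2le : z.2 ≤ z₀.2 + r := by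
      have := abs_le.mp habs2; linarith [this.2]
    have hsq2 : r ^ 2 < R ^ 2 * (2 * z₀.2 + 2 * r) := by nlinarith [sq_nonneg R]
    have hrρ : r < ρ := by
      by_contra hcon
      push_neg at hcon
      have hρ_eq : ρ = 2 * R ^ 2 + 2 * R * u := by rw [hρ_def, hs_def]; ring
      have g1 : ρ * r ≤ r * r := mul_le_mul_of_nonneg_right hcon hr0
      have g2 : 2 * R * u ≤ r := by
        have : 2 * R * u ≤ ρ := by rw [hρ_eq]; nlinarith [sq_nonneg R]
        linarith
      have g3 : (2 * R * u) * (2 * R * u) ≤ (2 * R * u) * r :=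
        mul_le_mul_of_nonneg_left g2 (by positivity)
      have g4 : ρ * r = 2 * R ^ 2 * r + (2 * R * u) * r := by rw [hρ_eq]; ring
      have g5 : (2 * R * u) * (2 * R * u) = 4 * R ^ 2 * z₀.2 := by rw [← huy]; ring
      have g6 : 0 ≤ R ^ 2 * z₀.2 := mul_nonneg (sq_nonneg R) hy₀
      nlinarith [hsq2, g1, g3, g4, g5, g6]
    constructor
    · simp only [Set.mem_Ioo]
      have := abs_lt.mp (lt_of_le_of_lt habs1 hrρ)
      constructor <;> linarith [this.1, this.2]
    · simp only [Set.mem_Ioo]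
      have := abs_lt.mp (lt_of_le_of_lt habs2 hrρ)
      constructor <;> linarith [this.1, this.2]
  -- volumes
  have hQvol : (volume Q).toReal = 2 * h * (h / 2) := by
    rw [hQ_def, Measure.volume_eq_prod, Measure.prod_prod, Real.volume_Ioo, Real.volume_Ioo,
      ENNReal.toReal_mul, ENNReal.toReal_ofReal (by linarith), ENNReal.toReal_ofReal (by linarith)]
    ring
  have hTvolfin : volume T < ⊤ := by
    rw [hT_def, Measure.volume_eq_prod, Measure.prod_prod, Real.volume_Ioo, Real.volume_Ioo]
    exact ENNReal.mul_lt_top ENNReal.ofReal_lt_top ENNReal.ofReal_lt_top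
  have hTvol : (volume T).toReal = 2 * ρ * (2 * ρ) := by
    rw [hT_def, Measure.volume_eq_prod, Measure.prod_prod, Real.volume_Ioo, Real.volume_Ioo,
      ENNReal.toReal_mul, ENNReal.toReal_ofReal (by linarith), ENNReal.toReal_ofReal (by linarith)]
    ring
  have hBfin : volume (kochBall R z₀) < ⊤ := lt_of_le_of_lt (measure_mono hTsub) hTvolfin
  -- integrability
  have hfm : Measurable fun z : ℝ × ℝ => z.2 ^ β := by fun_prop
  have hIntT : IntegrableOn (fun z : ℝ × ℝ => z.2 ^ β) T volume := by
    apply Measure.integrableOn_of_bounded hTvolfin.ne hfm.aestronglyMeasurable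
      (M := (z₀.2 + ρ) ^ β)
    filter_upwards [ae_restrict_mem (by rw [hT_def]; exact measurableSet_Ioo.prod measurableSet_Ioo)]
      with z hz
    obtain ⟨_, hz2⟩ := hz
    simp only [Set.mem_Ioo] at hz2
    have h1 : |z.2| ≤ z₀.2 + ρ := by
      rw [abs_le]; constructor <;> linarith [hz2.1, hz2.2]
    calc ‖z.2 ^ β‖ = |z.2 ^ β| := Real.norm_eq_abs _
      _ ≤ |z.2| ^ β := Real.abs_rpow_le_abs_rpow _ _
      _ ≤ (z₀.2 + ρ) ^ β := Real.rpow_le_rpow (abs_nonneg _) h1 hβ.le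
  have hIntB : IntegrableOn (fun z : ℝ × ℝ => z.2 ^ β) (kochBall R z₀) volume :=
    hIntT.mono_set hTsub
  have hIntQ : IntegrableOn (fun z : ℝ × ℝ => z.2 ^ β) Q volume :=
    hIntB.mono_set hQsub
  -- power identities
  have hpow : s ^ ((2:ℝ) + 2 * β) = s ^ 2 * s ^ (2 * β) := by
    rw [Real.rpow_add hs, show ((2:ℝ)) = ((2:ℕ):ℝ) by norm_num, Real.rpow_natCast]
  have hpow2 : (s ^ 2) ^ β = s ^ (2 * β) := by
    rw [← Real.rpow_natCast s 2, ← Real.rpow_mul hs.le]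
    norm_num
  constructor
  · -- lower bound
    have hQmeas : MeasurableSet Q := by
      rw [hQ_def]; exact measurableSet_Ioo.prod measurableSet_Ioo
    have hQfin : volume Q ≠ ⊤ := by
      rw [hQ_def, Measure.volume_eq_prod, Measure.prod_prod, Real.volume_Ioo, Real.volume_Ioo]
      exact (ENNReal.mul_lt_top ENNReal.ofReal_lt_top ENNReal.ofReal_lt_top).ne
    have hlow1 : (z₀.2 + h/2) ^ β * (volume Q).toReal ≤ ∫ z in Q, z.2 ^ β := by
      apply setIntegral_ge_of_const_le_real hQmeas hQfin _ hIntQ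
      rintro z ⟨_, hz2⟩
      simp only [Set.mem_Ioo] at hz2
      exact Real.rpow_le_rpow (by positivity) hz2.1.le hβ.le
    have hlow2 : (∫ z in Q, z.2 ^ β) ≤ ∫ z in kochBall R z₀, z.2 ^ β := by
      apply setIntegral_mono_set hIntB _ (HasSubset.Subset.eventuallyLE hQsub)
      refine (ae_restrict_iff' (kochBall_measurableSet R z₀)).mpr ?_
      exact ae_of_all _ fun z hz => Real.rpow_nonneg hz.1.le β
    have hbase : s ^ 2 / 32 ≤ z₀.2 + h / 2 := by
      rw [hh_def, hs_def, ← huy]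
      nlinarith [sq_nonneg u, sq_nonneg R, mul_nonneg hR.le hu0]
    have hc1 : (s ^ 2 / 32) ^ β ≤ (z₀.2 + h / 2) ^ β :=
      Real.rpow_le_rpow (by positivity) hbase hβ.le
    have hdiv : (s ^ 2 / 32) ^ β = s ^ (2 * β) / 32 ^ β := by
      rw [Real.div_rpow (by positivity) (by norm_num), hpow2]
    calc (64 * 32 ^ β : ℝ)⁻¹ * R ^ 2 * s ^ ((2:ℝ) + 2 * β)
        = (s ^ 2 / 32) ^ β * (2 * h * (h / 2)) := by
          rw [hdiv, hpow, hh_def]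
          have h32 : (0:ℝ) < 32 ^ β := by positivity
          field_simp
          ring
      _ ≤ (z₀.2 + h/2) ^ β * (2 * h * (h / 2)) := by
          apply mul_le_mul_of_nonneg_right hc1 (by positivity)
      _ = (z₀.2 + h/2) ^ β * (volume Q).toReal := by rw [hQvol]
      _ ≤ ∫ z in Q, z.2 ^ β := hlow1
      _ ≤ ∫ z in kochBall R z₀, z.2 ^ β := hlow2
  · -- upper bound
    have hup1 : (∫ z in kochBall R z₀, z.2 ^ β) ≤
        (z₀.2 + ρ) ^ β * (volume (kochBall R z₀)).toReal := by
      have hnorm : ‖∫ z in kochBall R z₀, z.2 ^ β‖ ≤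
          (z₀.2 + ρ) ^ β * (volume (kochBall R z₀)).toReal := by
        apply norm_setIntegral_le_of_norm_le_const hBfin
        intro z hz
        have hz2 : z.2 < z₀.2 + ρ := by
          have := (hTsub hz).2
          simp only [Set.mem_Ioo] at this
          exact this.2
        rw [Real.norm_eq_abs, abs_of_nonneg (Real.rpow_nonneg hz.1.le β)]
        exact Real.rpow_le_rpow hz.1.le hz2.le hβ.le
      calc (∫ z in kochBall R z₀, z.2 ^ β) ≤ ‖∫ z in kochBall R z₀, z.2 ^ β‖ :=
            le_abs_self _
        _ ≤ _ := hnorm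
    have hvolB : (volume (kochBall R z₀)).toReal ≤ 2 * ρ * (2 * ρ) := by
      rw [← hTvol]
      exact ENNReal.toReal_mono hTvolfin.ne (measure_mono hTsub)
    have hup2 : (z₀.2 + ρ) ^ β * (volume (kochBall R z₀)).toReal ≤
        (z₀.2 + ρ) ^ β * (2 * ρ * (2 * ρ)) :=
      mul_le_mul_of_nonneg_left hvolB (Real.rpow_nonneg (by positivity) β)
    have hbase : z₀.2 + ρ ≤ 3 * s ^ 2 := by
      rw [hρ_def, hs_def, ← huy]
      nlinarith [sq_nonneg u, sq_nonneg R, mul_nonneg hR.le hu0]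
    have hc2 : (z₀.2 + ρ) ^ β ≤ 3 ^ β * s ^ (2 * β) := by
      calc (z₀.2 + ρ) ^ β ≤ (3 * s ^ 2) ^ β :=
            Real.rpow_le_rpow (by positivity) hbase hβ.le
        _ = 3 ^ β * (s ^ 2) ^ β := Real.mul_rpow (by norm_num) (by positivity)
        _ = 3 ^ β * s ^ (2 * β) := by rw [hpow2]
    have h3le : (3:ℝ) ^ β ≤ 32 ^ β :=
      Real.rpow_le_rpow (by norm_num) (by norm_num) hβ.le
    calc (∫ z in kochBall R z₀, z.2 ^ β)
        ≤ (z₀.2 + ρ) ^ β * (2 * ρ * (2 * ρ)) := hup1.trans hup2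
      _ ≤ (3 ^ β * s ^ (2 * β)) * (2 * ρ * (2 * ρ)) := by
          apply mul_le_mul_of_nonneg_right hc2 (by positivity)
      _ = 16 * 3 ^ β * R ^ 2 * (s ^ 2 * s ^ (2 * β)) := by rw [hρ_def]; ring
      _ ≤ 64 * 32 ^ β * R ^ 2 * (s ^ 2 * s ^ (2 * β)) := by
          have hpos : (0:ℝ) ≤ R ^ 2 * (s ^ 2 * s ^ (2 * β)) := by positivity
          have h16 : (16:ℝ) * 3 ^ β ≤ 64 * 32 ^ β := by
            have h32pos : (0:ℝ) ≤ 32 ^ β := Real.rpow_nonneg (by norm_num) β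
            linarith [h3le]
          have := mul_le_mul_of_nonneg_right h16 hpos
          linarith [this]
      _ = 64 * 32 ^ β * R ^ 2 * s ^ ((2:ℝ) + 2 * β) := by rw [hpow]
end

section
/- Let β > 0 and fix k > 1 such that 2 k^{-β} = 1/2. For any function u ∈ L²((0,kδ), y^{β-1} dy) with u_y ∈ L²((0,kδ), y^β dy), and any constant c ∈ R, one has ∫_0^δ |u(y)-c|² y^{β-1} dy ≤ 2 k^{-β} ∫_0^{kδ} |u(y)-c|² y^{β-1} dy + C_0 ∫_0^{kδ} |u_y(y)|² y^β dy, where C_0 = 2δ(1+k^{1-β})/|1-β| if β ≠ 1 and C_0 = 2δ log k if β = 1. Consequently, absorbing the first term, ∫_0^δ |u-c|² y^{β-1} dy ≤ (4k^{-β}/(1-2k^{-β})) ∫_δ^{kδ} |u-c|² y^{β-1} dy + (C_0/(1-2k^{-β})) ∫_0^{kδ} |u_y|² y^β dy. -/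
open MeasureTheory Set

lemma my_cs {μ : Measure ℝ} {f g : ℝ → ℝ} (hf0 : 0 ≤ᵐ[μ] f) (hg0 : 0 ≤ᵐ[μ] g)
    (hfm : AEStronglyMeasurable f μ) (hgm : AEStronglyMeasurable g μ)
    (hf2 : Integrable (fun x => f x ^ 2) μ) (hg2 : Integrable (fun x => g x ^ 2) μ) :
    (∫ x, f x * g x ∂μ) ^ 2 ≤ (∫ x, f x ^ 2 ∂μ) * (∫ x, g x ^ 2 ∂μ) := by
  have hpq : Real.HolderConjugate 2 2 := Real.HolderConjugate.two_two
  have h2 : (ENNReal.ofReal 2) = 2 := by norm_num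
  have hfL : MemLp f (ENNReal.ofReal 2) μ := by
    rw [h2]; exact (memLp_two_iff_integrable_sq hfm).2 hf2
  have hgL : MemLp g (ENNReal.ofReal 2) μ := by
    rw [h2]; exact (memLp_two_iff_integrable_sq hgm).2 hg2
  have key := integral_mul_le_Lp_mul_Lq_of_nonneg hpq hf0 hg0 hfL hgL
  have hrw : ∀ h : ℝ → ℝ, (∫ x, h x ^ (2:ℝ) ∂μ) = ∫ x, h x ^ 2 ∂μ := by
    intro h
    refine integral_congr_ae (Filter.Eventually.of_forall fun x => ?_)
    exact Real.rpow_two _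
  rw [hrw f, hrw g] at key
  have hA : 0 ≤ ∫ x, f x ^ 2 ∂μ := integral_nonneg fun x => sq_nonneg _
  have hB : 0 ≤ ∫ x, g x ^ 2 ∂μ := integral_nonneg fun x => sq_nonneg _
  have h0 : 0 ≤ ∫ x, f x * g x ∂μ :=
    integral_nonneg_of_ae (hf0.mp (hg0.mono fun x hg hf => mul_nonneg hf hg))
  calc (∫ x, f x * g x ∂μ) ^ 2
      ≤ ((∫ x, f x ^ 2 ∂μ) ^ (1/2:ℝ) * (∫ x, g x ^ 2 ∂μ) ^ (1/2:ℝ)) ^ 2 :=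
        pow_le_pow_left₀ h0 key 2
    _ = (∫ x, f x ^ 2 ∂μ) * (∫ x, g x ^ 2 ∂μ) := by
        rw [mul_pow, ← Real.rpow_natCast ((∫ x, f x ^ 2 ∂μ) ^ (1/2:ℝ)) 2,
          ← Real.rpow_natCast ((∫ x, g x ^ 2 ∂μ) ^ (1/2:ℝ)) 2,
          ← Real.rpow_mul hA, ← Real.rpow_mul hB]
        norm_num

set_option maxHeartbeats 1600000 in
/-- One-dimensional core of the degenerate-weight Poincaré inequality. Let `β > 0` and
`k > 1` satisfy `2 k^{-β} = 1/2`. For `u` with `u ∈ L²((0,kδ), y^{β-1} dy)` and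
`u' ∈ L²((0,kδ), y^β dy)`, and any `c ∈ ℝ`:
`∫₀^δ |u-c|² y^{β-1} ≤ 2k^{-β} ∫₀^{kδ} |u-c|² y^{β-1} + C₀ ∫₀^{kδ} |u'|² y^β`, with
`C₀ = 2δ(1+k^{1-β})/|1-β|` if `β ≠ 1` and `C₀ = 2δ log k` if `β = 1`; and consequently
`∫₀^δ |u-c|² y^{β-1} ≤ (4k^{-β}/(1-2k^{-β})) ∫_δ^{kδ} |u-c|² y^{β-1}
  + (C₀/(1-2k^{-β})) ∫₀^{kδ} |u'|² y^β`. -/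
theorem one_dim_poincare_core (β k δ : ℝ) (hβ : 0 < β) (hk : 1 < k) (hδ : 0 < δ)
    (hknorm : 2 * k ^ (-β) = 1/2) (u u' : ℝ → ℝ)
    (hderiv : ∀ y ∈ Set.Ioc 0 (k * δ), HasDerivAt u (u' y) y)
    (hu : IntegrableOn (fun y => (u y) ^ 2 * y ^ (β - 1)) (Set.Ioc 0 (k * δ)))
    (hu' : IntegrableOn (fun y => (u' y) ^ 2 * y ^ β) (Set.Ioc 0 (k * δ)))
    (c : ℝ) :
    (∫ y in Set.Ioc 0 δ, (u y - c) ^ 2 * y ^ (β - 1)) ≤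
        2 * k ^ (-β) * (∫ y in Set.Ioc 0 (k * δ), (u y - c) ^ 2 * y ^ (β - 1)) +
        (if β = 1 then 2 * δ * Real.log k else 2 * δ * (1 + k ^ (1 - β)) / |1 - β|) *
          (∫ y in Set.Ioc 0 (k * δ), (u' y) ^ 2 * y ^ β) ∧
    (∫ y in Set.Ioc 0 δ, (u y - c) ^ 2 * y ^ (β - 1)) ≤
        4 * k ^ (-β) / (1 - 2 * k ^ (-β)) *
          (∫ y in Set.Ioc δ (k * δ), (u y - c) ^ 2 * y ^ (β - 1)) +
        ((if β = 1 then 2 * δ * Real.log k else 2 * δ * (1 + k ^ (1 - β)) / |1 - β|) /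
            (1 - 2 * k ^ (-β))) *
          (∫ y in Set.Ioc 0 (k * δ), (u' y) ^ 2 * y ^ β) := by
  have hk0 : (0:ℝ) < k := lt_trans one_pos hk
  have hkδ0 : 0 < k * δ := mul_pos hk0 hδ
  have hδk : δ ≤ k * δ := by nlinarith
  set E := ∫ y in Ioc (0:ℝ) (k*δ), u' y ^ 2 * y ^ β with hE
  set C₀ : ℝ := if β = 1 then 2 * δ * Real.log k else 2 * δ * (1 + k ^ (1-β)) / |1 - β|
    with hC₀
  set M : ℝ := if β = 1 then Real.log k else (k ^ (1-β) - 1)/(1-β) with hMdef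
  have hK0 : 0 < k ^ (1-β) := Real.rpow_pos_of_pos hk0 _
  have hM0 : 0 ≤ M := by
    rcases eq_or_ne β 1 with h1 | h1
    · simp [hMdef, h1, Real.log_nonneg hk.le]
    · rw [hMdef, if_neg h1]
      rcases lt_or_gt_of_ne h1 with hlt | hgt
      · have : 1 ≤ k ^ (1-β) := Real.one_le_rpow hk.le (by linarith)
        exact div_nonneg (by linarith) (by linarith)
      · have : k ^ (1-β) ≤ 1 := Real.rpow_le_one_of_one_le_of_nonpos hk.le (by linarith)
        rw [div_nonneg_iff]; right; constructor <;> linarith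
  have hMC : 2 * δ * M ≤ C₀ := by
    rcases eq_or_ne β 1 with h1 | h1
    · simp [hMdef, hC₀, h1]
    · rw [hMdef, hC₀, if_neg h1, if_neg h1]
      have hMle : (k ^ (1-β) - 1)/(1-β) ≤ (1 + k ^ (1-β))/|1-β| := by
        rcases lt_or_gt_of_ne h1 with hlt | hgt
        · rw [abs_of_pos (by linarith : (0:ℝ) < 1-β)]
          exact div_le_div_of_nonneg_right (by linarith) (by linarith)
        · rw [abs_of_neg (by linarith : 1-β < 0),
            show (k ^ (1-β) - 1)/(1-β) = (1 - k ^ (1-β))/(-(1-β)) by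
              rw [show (1 - k^(1-β)) = -(k^(1-β)-1) by ring, neg_div_neg_eq]]
          exact div_le_div_of_nonneg_right (by linarith) (by linarith)
      calc 2 * δ * ((k ^ (1-β) - 1)/(1-β)) ≤ 2 * δ * ((1 + k ^ (1-β))/|1-β|) := by
            apply mul_le_mul_of_nonneg_left hMle (by linarith)
        _ = 2 * δ * (1 + k ^ (1-β)) / |1-β| := by ring
  -- measurability
  have hucont : ContinuousOn u (Ioc 0 (k*δ)) := fun y hy =>
    ((hderiv y hy).continuousAt).continuousWithinAt
  have humeas : AEStronglyMeasurable u (volume.restrict (Ioc 0 (k*δ))) :=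
    hucont.aestronglyMeasurable measurableSet_Ioc
  have hwmeas : ∀ r : ℝ, Measurable (fun y : ℝ => y ^ r) := fun r => by fun_prop
  have hu'm : AEStronglyMeasurable u' (volume.restrict (Ioc 0 (k*δ))) := by
    have h1 : u' =ᵐ[volume.restrict (Ioc 0 (k*δ))] deriv u := by
      rw [Filter.EventuallyEq, ae_restrict_iff' measurableSet_Ioc]
      exact Filter.Eventually.of_forall fun y hy => ((hderiv y hy).deriv).symm
    exact (measurable_deriv u).aestronglyMeasurable.congr h1.symm
  -- integrability on Ioc 0 (kδ)
  have hpowInt : IntegrableOn (fun y : ℝ => y ^ (β-1)) (Ioc 0 (k*δ)) := by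
    rw [← intervalIntegrable_iff_integrableOn_Ioc_of_le hkδ0.le]
    exact intervalIntegral.intervalIntegrable_rpow' (by linarith)
  have huw : IntegrableOn (fun y => u y * y ^ (β-1)) (Ioc 0 (k*δ)) := by
    apply Integrable.mono' (hu.add hpowInt)
      (humeas.mul (hwmeas (β-1)).aestronglyMeasurable)
    rw [ae_restrict_iff' measurableSet_Ioc]
    refine Filter.Eventually.of_forall fun y hy => ?_
    have hw0 : 0 ≤ y ^ (β-1) := Real.rpow_nonneg hy.1.le _
    simp only [Pi.mul_apply, Pi.add_apply]
    rw [Real.norm_eq_abs, abs_mul, abs_of_nonneg hw0]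
    have h1 : |u y| ≤ u y ^ 2 + 1 := by
      nlinarith [sq_nonneg (|u y| - 1), sq_abs (u y), abs_nonneg (u y)]
    nlinarith [abs_nonneg (u y)]
  have hA : IntegrableOn (fun y => (u y - c) ^ 2 * y ^ (β-1)) (Ioc 0 (k*δ)) := by
    have he : (fun y => (u y - c) ^ 2 * y ^ (β-1)) = fun y =>
        u y ^ 2 * y ^ (β-1) - (2*c) * (u y * y ^ (β-1)) + c^2 * y ^ (β-1) := by
      funext y; ring
    rw [he]
    exact (hu.sub (huw.const_mul (2*c))).add (hpowInt.const_mul (c^2))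
  have hAcomp : IntegrableOn (fun y => (u (k*y) - c) ^ 2 * (k*y) ^ (β-1)) (Ioc 0 δ) := by
    have h1 : IntervalIntegrable (fun y => (u y - c) ^ 2 * y ^ (β-1)) volume 0 (k*δ) := by
      rw [intervalIntegrable_iff_integrableOn_Ioc_of_le hkδ0.le]; exact hA
    have h2 := h1.comp_mul_left (c := k)
    rw [zero_div, mul_div_cancel_left₀ _ (ne_of_gt hk0)] at h2
    rw [← intervalIntegrable_iff_integrableOn_Ioc_of_le hδ.le]
    exact h2
  have hCoV : (∫ y in Ioc (0:ℝ) δ, (u (k*y) - c) ^ 2 * (k*y) ^ (β-1))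
      = k⁻¹ * ∫ y in Ioc 0 (k*δ), (u y - c) ^ 2 * y ^ (β-1) := by
    rw [← intervalIntegral.integral_of_le hδ.le, ← intervalIntegral.integral_of_le hkδ0.le]
    have h := intervalIntegral.integral_comp_mul_left
      (a := 0) (b := δ) (f := fun y => (u y - c) ^ 2 * y ^ (β-1)) (ne_of_gt hk0)
    simpa [smul_eq_mul] using h
  have hposu' : 0 ≤ᵐ[volume.restrict (Ioc (0:ℝ) (k*δ))] fun t => u' t ^ 2 * t ^ β := by
    refine (ae_restrict_iff' measurableSet_Ioc).2 (Filter.Eventually.of_forall fun t ht => ?_)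
    exact mul_nonneg (sq_nonneg _) (Real.rpow_nonneg ht.1.le _)
  have hE0 : 0 ≤ E := by
    rw [hE]
    exact setIntegral_nonneg measurableSet_Ioc fun t ht =>
      mul_nonneg (sq_nonneg _) (Real.rpow_nonneg ht.1.le _)
  have key : ∀ y ∈ Ioc (0:ℝ) δ, (u y - c) ^ 2 * y ^ (β-1) ≤
      2*k^(1-β)*((u (k*y) - c) ^ 2 * (k*y) ^ (β-1)) + 2*M*E := by
    intro y hy
    obtain ⟨hy0, hyδ⟩ := hy
    have hky : y < k*y := by nlinarith
    have hsub : Ioc y (k*y) ⊆ Ioc 0 (k*δ) := fun t ht =>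
      ⟨lt_trans hy0 ht.1, le_trans ht.2 (by nlinarith)⟩
    have hIccsub : Icc y (k*y) ⊆ Ioc 0 (k*δ) := fun t ht =>
      ⟨lt_of_lt_of_le hy0 ht.1, le_trans ht.2 (by nlinarith)⟩
    have hu'm2 : AEStronglyMeasurable u' (volume.restrict (Ioc y (k*y))) :=
      hu'm.mono_measure (Measure.restrict_mono hsub le_rfl)
    have hu'2 : IntegrableOn (fun t => u' t ^ 2 * t ^ β) (Ioc y (k*y)) := hu'.mono_set hsub
    have hnegcont : ContinuousOn (fun t : ℝ => t ^ (-β)) (Icc y (k*y)) :=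
      continuousOn_id.rpow_const fun t ht => Or.inl (ne_of_gt (lt_of_lt_of_le hy0 ht.1))
    have hneg : IntegrableOn (fun t : ℝ => t ^ (-β)) (Ioc y (k*y)) :=
      (hnegcont.integrableOn_Icc).mono_set Ioc_subset_Icc_self
    have hae2 : ∀ t ∈ Ioc y (k*y), u' t ^ 2 * t ^ β = (|u' t| * t ^ (β/2:ℝ)) ^ 2 := by
      intro t ht
      have ht0 : 0 < t := lt_trans hy0 ht.1
      rw [mul_pow, sq_abs, ← Real.rpow_natCast (t ^ (β/2:ℝ)) 2, ← Real.rpow_mul ht0.le]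
      norm_num
    have hae3 : ∀ t ∈ Ioc y (k*y), t ^ (-β) = (t ^ (-(β/2):ℝ)) ^ 2 := by
      intro t ht
      have ht0 : 0 < t := lt_trans hy0 ht.1
      rw [← Real.rpow_natCast (t ^ (-(β/2):ℝ)) 2, ← Real.rpow_mul ht0.le]
      norm_num
    have hu'int : IntegrableOn u' (Ioc y (k*y)) := by
      apply Integrable.mono' (hu'2.add hneg) hu'm2
      rw [ae_restrict_iff' measurableSet_Ioc]
      refine Filter.Eventually.of_forall fun t ht => ?_
      have ht0 : 0 < t := lt_trans hy0 ht.1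
      have hab : t ^ (β/2:ℝ) * t ^ (-(β/2):ℝ) = 1 := by
        rw [← Real.rpow_add ht0]; norm_num
      have hpq : ∀ p q : ℝ, 2*(p*q) ≤ p^2 + q^2 := fun p q => by nlinarith [sq_nonneg (p-q)]
      have h5 := hpq (|u' t| * t ^ (β/2:ℝ)) (t ^ (-(β/2):ℝ))
      rw [mul_assoc, hab, mul_one, mul_pow, sq_abs] at h5
      simp only [Pi.add_apply]
      rw [Real.norm_eq_abs, hae2 t ht, hae3 t ht, mul_pow, sq_abs]
      linarith [abs_nonneg (u' t)]
    have hftc : ∫ t in y..(k*y), u' t = u (k*y) - u y := by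
      apply intervalIntegral.integral_eq_sub_of_hasDerivAt
      · intro t ht
        rw [uIcc_of_le hky.le] at ht
        exact hderiv t (hIccsub ht)
      · rw [intervalIntegrable_iff_integrableOn_Ioc_of_le hky.le]
        exact hu'int
    have habsm : AEStronglyMeasurable (fun t => |u' t|) (volume.restrict (Ioc y (k*y))) := by
      simpa [Real.norm_eq_abs] using hu'm2.norm
    have hcs : (∫ t in Ioc y (k*y), |u' t|) ^ 2 ≤
        (∫ t in Ioc y (k*y), u' t ^ 2 * t ^ β) * (∫ t in Ioc y (k*y), t ^ (-β)) := by
      have e1 : (∫ t in Ioc y (k*y), |u' t|)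
          = ∫ t in Ioc y (k*y), (|u' t| * t ^ (β/2:ℝ)) * t ^ (-(β/2):ℝ) := by
        refine (setIntegral_congr_fun measurableSet_Ioc fun t ht => ?_)
        have ht0 : 0 < t := lt_trans hy0 ht.1
        rw [mul_assoc, ← Real.rpow_add ht0]
        norm_num
      have e2 : (∫ t in Ioc y (k*y), u' t ^ 2 * t ^ β)
          = ∫ t in Ioc y (k*y), ((|u' t| * t ^ (β/2:ℝ)) ^ 2) :=
        setIntegral_congr_fun measurableSet_Ioc fun t ht => hae2 t ht
      have e3 : (∫ t in Ioc y (k*y), t ^ (-β))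
          = ∫ t in Ioc y (k*y), ((t ^ (-(β/2):ℝ)) ^ 2) :=
        setIntegral_congr_fun measurableSet_Ioc fun t ht => hae3 t ht
      rw [e1, e2, e3]
      apply my_cs
      · refine (ae_restrict_iff' measurableSet_Ioc).2 (Filter.Eventually.of_forall fun t ht => ?_)
        exact mul_nonneg (abs_nonneg _) (Real.rpow_nonneg (lt_trans hy0 ht.1).le _)
      · refine (ae_restrict_iff' measurableSet_Ioc).2 (Filter.Eventually.of_forall fun t ht => ?_)
        exact Real.rpow_nonneg (lt_trans hy0 ht.1).le _
      · exact habsm.mul (hwmeas _).aestronglyMeasurable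
      · exact (hwmeas _).aestronglyMeasurable
      · refine hu'2.congr ?_
        refine (ae_restrict_iff' measurableSet_Ioc).2 (Filter.Eventually.of_forall fun t ht => ?_)
        exact hae2 t ht
      · refine hneg.congr ?_
        refine (ae_restrict_iff' measurableSet_Ioc).2 (Filter.Eventually.of_forall fun t ht => ?_)
        exact hae3 t ht
    have habs : |∫ t in Ioc y (k*y), u' t| ≤ ∫ t in Ioc y (k*y), |u' t| := by
      simpa [Real.norm_eq_abs] using
        norm_integral_le_integral_norm (μ := volume.restrict (Ioc y (k*y))) u'
    have hG : (∫ t in Ioc y (k*y), t ^ (-β)) * y ^ (β-1) = M := by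
      rcases eq_or_ne β 1 with h1 | h1
      · rw [hMdef, if_pos h1]
        have e4 : EqOn (fun t : ℝ => t ^ (-β)) (fun t : ℝ => t⁻¹) (Ioc y (k*y)) := by
          intro t ht
          simp only [h1, Real.rpow_neg_one]
        rw [setIntegral_congr_fun measurableSet_Ioc e4,
          ← intervalIntegral.integral_of_le hky.le,
          integral_inv_of_pos hy0 (by positivity),
          mul_div_cancel_right₀ k (ne_of_gt hy0), h1]
        norm_num
      · rw [hMdef, if_neg h1, ← intervalIntegral.integral_of_le hky.le,
          integral_rpow (Or.inr ⟨fun h => h1 (neg_inj.mp h), by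
            rw [uIcc_of_le hky.le]
            exact fun hmem => absurd hmem.1 (not_le.mpr hy0)⟩)]
        rw [show -β + 1 = 1 - β by ring, Real.mul_rpow hk0.le hy0.le]
        have hy1 : y ^ (1-β) * y ^ (β-1) = 1 := by
          rw [← Real.rpow_add hy0]; norm_num
        rw [div_mul_eq_mul_div, sub_mul, mul_assoc, hy1, mul_one]
    have hHE : (∫ t in Ioc y (k*y), u' t ^ 2 * t ^ β) ≤ E := by
      rw [hE]
      exact setIntegral_mono_set hu' hposu' (HasSubset.Subset.eventuallyLE hsub)
    have hI10 : 0 ≤ ∫ t in Ioc y (k*y), |u' t| :=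
      setIntegral_nonneg measurableSet_Ioc fun t ht => abs_nonneg _
    have hw0 : 0 ≤ y ^ (β-1) := Real.rpow_nonneg hy0.le _
    have hub : (u y - c)^2 ≤ 2*(u (k*y) - c)^2 + 2 * (∫ t in Ioc y (k*y), |u' t|)^2 := by
      have heq : u y - c = (u (k*y) - c) - ∫ t in y..(k*y), u' t := by rw [hftc]; ring
      rw [heq, intervalIntegral.integral_of_le hky.le]
      have hB2 : (∫ t in Ioc y (k*y), u' t)^2 ≤ (∫ t in Ioc y (k*y), |u' t|)^2 := by
        rw [← sq_abs]
        exact pow_le_pow_left₀ (abs_nonneg _) habs 2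
      nlinarith [sq_nonneg ((u (k*y) - c) + ∫ t in Ioc y (k*y), u' t), hB2]
    have step1 : (u y - c)^2 * y^(β-1) ≤
        (2*(u (k*y)-c)^2 + 2*(∫ t in Ioc y (k*y), |u' t|)^2) * y^(β-1) :=
      mul_le_mul_of_nonneg_right hub hw0
    have h5 : (∫ t in Ioc y (k*y), |u' t|)^2 * y^(β-1) ≤ M * E := by
      calc (∫ t in Ioc y (k*y), |u' t|)^2 * y^(β-1)
          ≤ ((∫ t in Ioc y (k*y), u' t ^ 2 * t ^ β) * (∫ t in Ioc y (k*y), t ^ (-β)))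
              * y^(β-1) := mul_le_mul_of_nonneg_right hcs hw0
        _ = (∫ t in Ioc y (k*y), u' t ^ 2 * t ^ β)
              * ((∫ t in Ioc y (k*y), t ^ (-β)) * y^(β-1)) := by ring
        _ = (∫ t in Ioc y (k*y), u' t ^ 2 * t ^ β) * M := by rw [hG]
        _ ≤ E * M := mul_le_mul_of_nonneg_right hHE hM0
        _ = M * E := mul_comm _ _
    have heqw : 2*k^(1-β)*((u (k*y)-c)^2*(k*y)^(β-1)) = 2*(u (k*y)-c)^2 * y^(β-1) := by
      rw [Real.mul_rpow hk0.le hy0.le]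
      have hkk : k^(1-β) * k^(β-1) = 1 := by rw [← Real.rpow_add hk0]; norm_num
      calc 2*k^(1-β)*((u (k*y)-c)^2*(k^(β-1)*y^(β-1)))
          = (k^(1-β)*k^(β-1)) * (2*(u (k*y)-c)^2 * y^(β-1)) := by ring
        _ = 2*(u (k*y)-c)^2 * y^(β-1) := by rw [hkk, one_mul]
    rw [heqw]
    nlinarith [step1, h5]
  set L := ∫ y in Ioc (0:ℝ) δ, (u y - c) ^ 2 * y ^ (β-1) with hLdef
  set I := ∫ y in Ioc (0:ℝ) (k*δ), (u y - c) ^ 2 * y ^ (β-1) with hIdef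
  set J := ∫ y in Ioc δ (k*δ), (u y - c) ^ 2 * y ^ (β-1) with hJdef
  have hL : IntegrableOn (fun y => (u y - c) ^ 2 * y ^ (β-1)) (Ioc 0 δ) :=
    hA.mono_set (Ioc_subset_Ioc_right hδk)
  have hconstI : IntegrableOn (fun _ : ℝ => 2*M*E) (Ioc 0 δ) :=
    integrableOn_const measure_Ioc_lt_top.ne
  have hRint : IntegrableOn
      (fun y => 2*k^(1-β)*((u (k*y) - c) ^ 2 * (k*y) ^ (β-1)) + 2*M*E) (Ioc 0 δ) :=
    (hAcomp.const_mul _).add hconstI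
  have hmono : L ≤ ∫ y in Ioc (0:ℝ) δ,
      (2*k^(1-β)*((u (k*y) - c) ^ 2 * (k*y) ^ (β-1)) + 2*M*E) := by
    rw [hLdef]
    exact setIntegral_mono_on hL hRint measurableSet_Ioc key
  have hsplit : (∫ y in Ioc (0:ℝ) δ,
      (2*k^(1-β)*((u (k*y) - c) ^ 2 * (k*y) ^ (β-1)) + 2*M*E))
      = 2*k^(1-β) * (k⁻¹ * I) + 2*M*E*δ := by
    rw [integral_add (hAcomp.const_mul _) hconstI, integral_const_mul, hCoV,
      setIntegral_const, Real.volume_real_Ioc, smul_eq_mul,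
      max_eq_left (by linarith : (0:ℝ) ≤ δ - 0)]
    ring
  have hkk2 : 2 * k^(1-β) * (k⁻¹ * I) = 2 * k^(-β) * I := by
    have h : k^(1-β) * k⁻¹ = k^(-β) := by
      rw [← Real.rpow_neg_one k, ← Real.rpow_add hk0, show (1-β) + (-1) = -β by ring]
    calc 2*k^(1-β)*(k⁻¹*I) = 2*(k^(1-β)*k⁻¹)*I := by ring
      _ = 2*k^(-β)*I := by rw [h]
  have part1 : L ≤ 2 * k ^ (-β) * I + C₀ * E := by
    have h2 : 2*M*E*δ ≤ C₀ * E := by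
      have h3 := mul_le_mul_of_nonneg_right hMC hE0
      calc 2*M*E*δ = (2*δ*M)*E := by ring
        _ ≤ C₀*E := h3
    calc L ≤ 2*k^(1-β)*(k⁻¹*I) + 2*M*E*δ := by rw [← hsplit]; exact hmono
      _ ≤ 2*k^(-β)*I + C₀*E := by rw [hkk2]; linarith
  refine ⟨part1, ?_⟩
  have hJint : IntegrableOn (fun y => (u y - c) ^ 2 * y ^ (β-1)) (Ioc δ (k*δ)) :=
    hA.mono_set (Ioc_subset_Ioc_left hδ.le)
  have hIsplit : I = L + J := by
    rw [hIdef, ← Ioc_union_Ioc_eq_Ioc hδ.le hδk,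
      setIntegral_union (Ioc_disjoint_Ioc_of_le le_rfl) measurableSet_Ioc hL hJint]
  have hJ0 : 0 ≤ J := by
    rw [hJdef]
    exact setIntegral_nonneg measurableSet_Ioc fun t ht =>
      mul_nonneg (sq_nonneg _) (Real.rpow_nonneg (lt_trans hδ ht.1).le _)
  have h14 : k ^ (-β) = 1/4 := by linarith
  rw [h14] at part1 ⊢
  have target : L ≤ 2*J + 2*(C₀*E) := by linarith
  norm_num
  linarith
end
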